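/- arXiv:2306.07870 — 2 statements merged into one kernel-verified Lean document; each statement's English description precedes it below -/
import Mathlib

section
/- Let p be a binary word of length l that has r runs, r_1 of which are of size 1. For any n ≥ 0: if l ≥ 2 then B_{n,p}(2) = r_1 · binomial(n − r, l − r + 1), and if l = 1 then B_{n,p}(2) = binomial(n, 2). -/
/-- `occ p w` is the number of occurrences of `p` as a subsequence of `w`,
i.e. the number of choices of indices `i₁ < ⋯ < i_l` in `w` matching `p`. -/
def occ (p w : List Bool) : ℕ := w.sublists.count p

/-- `B n p k` is the number of binary words of length `n` with exactly `k` occurrences of `p`. -/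
noncomputable def B (n : ℕ) (p : List Bool) (k : ℕ) : ℕ :=
  Nat.card {w : List Bool // w.length = n ∧ occ p w = k}

/-- The list of runs (maximal blocks of consecutive equal letters) of a binary word. -/
def runs (p : List Bool) : List (List Bool) := p.splitBy (· == ·)

/-- The number of runs of a binary word. -/
def numRuns (p : List Bool) : ℕ := (runs p).length

/-- The number of runs of size `i` of a binary word. -/
def numRunsOfSize (p : List Bool) (i : ℕ) : ℕ := ((runs p).map List.length).count i

/-- `maxOcc n p` is the maximum number of occurrences of `p` among binary words of length `n`. -/
noncomputable def maxOcc (n : ℕ) (p : List Bool) : ℕ :=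
  sSup {k | ∃ w : List Bool, w.length = n ∧ occ p w = k}

/-- `p` has an internal zero at `n` if the sequence `(B n p k)_{k ≥ 0}` has an internal zero. -/
def HasInternalZeroAt (p : List Bool) (n : ℕ) : Prop :=
  ∃ k₁ k₂ k₃ : ℕ, k₁ < k₂ ∧ k₂ < k₃ ∧ B n p k₁ ≠ 0 ∧ B n p k₂ = 0 ∧ B n p k₃ ≠ 0

open List

lemma beqListEq : (List.instBEq : BEq (List Bool)) = instBEqOfDecidableEq := by
  have h1 : @LawfulBEq (List Bool) List.instBEq := inferInstance
  have h2 : @LawfulBEq (List Bool) instBEqOfDecidableEq := inferInstance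
  exact @lawful_beq_subsingleton (List Bool) _ _ h1 h2

lemma count_inst_eq (p : List Bool) (L : List (List Bool)) :
    @List.count _ List.instBEq p L = @List.count _ instBEqOfDecidableEq p L := by
  rw [beqListEq]

lemma occ_eq_sublists' (p w : List Bool) : occ p w = w.sublists'.count p := by
  unfold occ
  rw [count_inst_eq, count_inst_eq]
  simpa only [count_inst_eq] using (List.sublists_perm_sublists' w).count_eq p

@[simp] lemma occ_nil_right (p : List Bool) : occ p [] = if p = [] then 1 else 0 := by
  cases p <;> simp [occ]

lemma count_nil_map_cons (x : Bool) (L : List (List Bool)) :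
    (List.map (List.cons x) L).count ([] : List Bool) = 0 := by
  rw [List.count_eq_zero]; intro hm
  rcases List.mem_map.mp hm with ⟨y, _, hy⟩; cases hy

@[simp] lemma occ_cons_same (a : Bool) (q w : List Bool) :
    occ (a::q) (a::w) = occ (a::q) w + occ q w := by
  rw [occ_eq_sublists', occ_eq_sublists', occ_eq_sublists', List.sublists'_cons,
    List.count_append]
  congr 1
  simp only [count_inst_eq]
  simpa only [count_inst_eq] using List.count_map_of_injective w.sublists' (List.cons a) (List.cons_injective) q

lemma occ_cons_diff {x a : Bool} (h : x ≠ a) (q w : List Bool) :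
    occ (a::q) (x::w) = occ (a::q) w := by
  rw [occ_eq_sublists', occ_eq_sublists', List.sublists'_cons, List.count_append]
  have : (List.map (List.cons x) w.sublists').count (a::q) = 0 := by
    rw [List.count_eq_zero]
    intro hm
    rcases List.mem_map.mp hm with ⟨y, _, hy⟩
    injection hy with h1 _
    exact h h1
  omega

@[simp] lemma occ_empty (w : List Bool) : occ [] w = 1 := by
  induction w with
  | nil => simp
  | cons x w ih =>
    rw [occ_eq_sublists', List.sublists'_cons, List.count_append, ← occ_eq_sublists',
      count_nil_map_cons, ih]

lemma occ_pos_iff {q w : List Bool} : 0 < occ q w ↔ q <+ w := by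
  rw [occ, List.count_pos_iff, List.mem_sublists]

lemma occ_tail_pos {b : Bool} {q' w : List Bool} (h : 0 < occ (b::q') w) : 0 < occ q' w :=
  occ_pos_iff.mpr ((List.sublist_cons_self b q').trans (occ_pos_iff.mp h))

lemma occ_cons_zero {a : Bool} {q w : List Bool} (h : occ q w = 0) : occ (a::q) w = 0 := by
  by_contra hh
  have := occ_tail_pos (Nat.pos_of_ne_zero hh)
  omega

lemma two_le_occ {a : Bool} {u w : List Bool} (h : (a::a::u) <+ w) : 2 ≤ occ (a::u) w := by
  induction w with
  | nil => simp at h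
  | cons x w ih =>
    rcases List.sublist_cons_iff.mp h with h' | ⟨r, hr, hr'⟩
    · have := ih h'
      by_cases hx : x = a
      · subst hx; rw [occ_cons_same]; omega
      · rw [occ_cons_diff hx]; exact this
    · injection hr with h1 h2
      subst h1; subst h2
      rw [occ_cons_same]
      have h3 : 0 < occ (a::u) w := occ_pos_iff.mpr hr'
      have h4 : 0 < occ u w := occ_pos_iff.mpr ((List.sublist_cons_self a u).trans hr')
      omega

open scoped Classical

def allW : ℕ → Finset (List Bool)
  | 0 => {[]}
  | n+1 => ((allW n).image (List.cons true)) ∪ ((allW n).image (List.cons false))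

lemma mem_allW {n : ℕ} {w : List Bool} : w ∈ allW n ↔ w.length = n := by
  induction n generalizing w with
  | zero => cases w <;> simp [allW]
  | succ n ih =>
    cases w with
    | nil => simp [allW, Finset.mem_union, Finset.mem_image]
    | cons x w =>
      simp only [allW, Finset.mem_union, Finset.mem_image, List.length_cons]
      constructor
      · rintro (⟨u, hu, he⟩ | ⟨u, hu, he⟩) <;>
          (injection he with _ h2; subst h2; rw [ih.mp hu])
      · intro h
        cases x
        · exact Or.inr ⟨w, ih.mpr (by omega), rfl⟩
        · exact Or.inl ⟨w, ih.mpr (by omega), rfl⟩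

noncomputable def cnt (P : List Bool → Prop) (n : ℕ) : ℕ := ((allW n).filter P).card

lemma cnt_congr {P Q : List Bool → Prop} (h : ∀ w, P w ↔ Q w) (n : ℕ) : cnt P n = cnt Q n := by
  unfold cnt
  congr 1
  exact Finset.filter_congr (fun x _ => h x)

lemma cnt_zero (P : List Bool → Prop) : cnt P 0 = if P [] then 1 else 0 := by
  unfold cnt
  show (Finset.filter P {[]}).card = _
  rw [Finset.filter_singleton]
  split <;> simp

lemma cnt_false {P : List Bool → Prop} (h : ∀ w, ¬ P w) (n : ℕ) : cnt P n = 0 := by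
  unfold cnt
  rw [Finset.card_eq_zero, Finset.filter_eq_empty_iff]
  exact fun _ _ => h _

lemma cnt_succ (P : List Bool → Prop) (n : ℕ) :
    cnt P (n+1) = cnt (fun w => P (true::w)) n + cnt (fun w => P (false::w)) n := by
  unfold cnt
  show (Finset.filter P (_ ∪ _)).card = _
  rw [Finset.filter_union]
  rw [Finset.card_union_of_disjoint]
  · congr 1 <;>
    · rw [Finset.filter_image, Finset.card_image_of_injective _ (List.cons_injective)]
  · apply Finset.disjoint_filter_filter
    rw [Finset.disjoint_left]
    rintro x hx hy
    rcases Finset.mem_image.mp hx with ⟨u, _, hu⟩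
    rcases Finset.mem_image.mp hy with ⟨v, _, hv⟩
    rw [← hu] at hv
    simp at hv

lemma cnt_succ_pivot (a : Bool) (P : List Bool → Prop) (n : ℕ) :
    cnt P (n+1) = cnt (fun w => P (a::w)) n + cnt (fun w => P ((!a)::w)) n := by
  cases a
  · rw [cnt_succ]; exact Nat.add_comm _ _
  · rw [cnt_succ]; rfl

lemma cnt_split {P Q R : List Bool → Prop} (h : ∀ w, P w ↔ Q w ∨ R w)
    (hd : ∀ w, Q w → R w → False) (n : ℕ) : cnt P n = cnt Q n + cnt R n := by
  rw [cnt_congr h]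
  unfold cnt
  refine Eq.trans (congrArg Finset.card ?_) (Finset.card_union_of_disjoint ?_)
  · ext w
    simp only [Finset.mem_filter, Finset.mem_union]
    tauto
  · rw [Finset.disjoint_left]
    intro w hw hw'
    rw [Finset.mem_filter] at hw hw'
    exact hd w hw.2 hw'.2

lemma card_eq_cnt (P : List Bool → Prop) (n : ℕ) :
    Nat.card {w : List Bool // w.length = n ∧ P w} = cnt P n := by
  unfold cnt
  rw [← Nat.card_eq_finsetCard]
  apply Nat.card_congr
  apply Equiv.subtypeEquivRight
  intro w
  rw [Finset.mem_filter, mem_allW]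

lemma B_eq_cnt (n : ℕ) (p : List Bool) (k : ℕ) : B n p k = cnt (fun w => occ p w = k) n := by
  unfold B
  exact card_eq_cnt _ n

def bnd : Bool → List Bool → ℕ
  | _, [] => 0
  | a, b::q => (if a = b then 0 else 1) + bnd b q

def fstOne : Bool → List Bool → ℕ
  | _, [] => 1
  | a, b::_ => if a = b then 0 else 1

def c1 : Bool → List Bool → ℕ
  | _, [] => 0
  | a, b::q => if a = b then c1 b q else c1 b q + fstOne b q

lemma bnd_le (a : Bool) (q : List Bool) : bnd a q ≤ q.length := by
  induction q generalizing a with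
  | nil => simp [bnd]
  | cons b q ih =>
    simp only [bnd, List.length_cons]
    have := ih b
    split <;> omega

noncomputable def Ncnt (k : ℕ) (a : Bool) (q : List Bool) (n : ℕ) : ℕ :=
  cnt (fun w => occ (a::q) w = 0 ∧ occ q w = k) n

noncomputable def Jcnt (a : Bool) (t : List Bool) (n : ℕ) : ℕ :=
  cnt (fun w => occ (a::t) w = 1 ∧ occ t w = 1) n

lemma bool_eq_not {a b : Bool} (h : a ≠ b) : a = !b := by
  cases a <;> cases b <;> simp_all

-- occurrence positivity facts, restated for omega use
lemma occ_tail_ge {b : Bool} {q' w : List Bool} : 1 ≤ occ (b::q') w → 1 ≤ occ q' w :=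
  fun h => occ_tail_pos h

lemma occ_two (a : Bool) (u w : List Bool) : 1 ≤ occ (a::a::u) w → 2 ≤ occ (a::u) w :=
  fun h => two_le_occ (occ_pos_iff.mp h)

lemma Ncnt_nil (k : ℕ) (a : Bool) (n : ℕ) : Ncnt k a [] n = if k = 1 then 1 else 0 := by
  induction n with
  | zero =>
    rw [Ncnt, cnt_zero]
    by_cases hk : k = 1
    · simp [hk]
    · simp [hk, Ne.symm hk]
  | succ n ih =>
    rw [Ncnt, cnt_succ_pivot a]
    have h1 : cnt (fun w => occ [a] (a::w) = 0 ∧ occ [] (a::w) = k) n = 0 := by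
      apply cnt_false
      intro w
      rw [occ_cons_same]
      simp
    have h2 : cnt (fun w => occ [a] ((!a)::w) = 0 ∧ occ [] ((!a)::w) = k) n
        = Ncnt k a [] n := by
      rw [Ncnt]
      apply cnt_congr
      intro w
      rw [occ_cons_diff (Bool.not_ne_self a), occ_empty, occ_empty]
    rw [h1, h2, ih]
    omega

lemma Ncnt_within (k : ℕ) (a : Bool) (q' : List Bool) (n : ℕ) :
    Ncnt k a (a::q') (n+1) = Ncnt k a (a::q') n + Ncnt k a q' n := by
  rw [Ncnt, cnt_succ_pivot a]
  have h1 : cnt (fun w => occ (a::a::q') (a::w) = 0 ∧ occ (a::q') (a::w) = k) n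
      = Ncnt k a q' n := by
    rw [Ncnt]
    apply cnt_congr
    intro w
    rw [occ_cons_same, occ_cons_same]
    have f1 : occ (a::q') w = 0 → occ (a::a::q') w = 0 := fun h => occ_cons_zero h
    omega
  have h2 : cnt (fun w => occ (a::a::q') ((!a)::w) = 0 ∧ occ (a::q') ((!a)::w) = k) n
      = Ncnt k a (a::q') n := by
    rw [Ncnt]
    apply cnt_congr
    intro w
    rw [occ_cons_diff (Bool.not_ne_self a), occ_cons_diff (Bool.not_ne_self a)]
  rw [h1, h2, Nat.add_comm]

lemma Ncnt1_boundary {a b : Bool} (hab : a ≠ b) (q' : List Bool) (n : ℕ) :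
    Ncnt 1 a (b::q') (n+1) = Ncnt 1 b q' n := by
  have hba : (!b) = a := (bool_eq_not hab).symm
  rw [Ncnt, cnt_succ_pivot b]
  have h1 : cnt (fun w => occ (a::b::q') (b::w) = 0 ∧ occ (b::q') (b::w) = 1) n
      = Ncnt 1 b q' n := by
    rw [Ncnt]
    apply cnt_congr
    intro w
    rw [occ_cons_diff hab.symm, occ_cons_same]
    have f1 : occ (b::q') w = 0 → occ (a::b::q') w = 0 := fun h => occ_cons_zero h
    have f2 : 1 ≤ occ (b::q') w → 1 ≤ occ q' w := occ_tail_ge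
    omega
  have h2 : cnt (fun w => occ (a::b::q') ((!b)::w) = 0 ∧ occ (b::q') ((!b)::w) = 1) n
      = 0 := by
    apply cnt_false
    intro w
    rw [hba, occ_cons_same, occ_cons_diff hab]
    omega
  rw [h1, h2, Nat.add_zero]

lemma Ncnt2_boundary_nil {a b : Bool} (hab : a ≠ b) (n : ℕ) :
    Ncnt 2 a [b] (n+1) = Ncnt 1 a [b] n := by
  have hba : (!b) = a := (bool_eq_not hab).symm
  rw [Ncnt, cnt_succ_pivot b]
  have h1 : cnt (fun w => occ [a, b] (b::w) = 0 ∧ occ [b] (b::w) = 2) n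
      = Ncnt 1 a [b] n := by
    rw [Ncnt]
    apply cnt_congr
    intro w
    rw [occ_cons_diff hab.symm, occ_cons_same, occ_empty]
    omega
  have h2 : cnt (fun w => occ [a, b] ((!b)::w) = 0 ∧ occ [b] ((!b)::w) = 2) n = 0 := by
    apply cnt_false
    intro w
    rw [hba, occ_cons_same, occ_cons_diff hab]
    omega
  rw [h1, h2, Nat.add_zero]

lemma Ncnt2_boundary_same {a b : Bool} (hab : a ≠ b) (q'' : List Bool) (n : ℕ) :
    Ncnt 2 a (b::b::q'') (n+1) = Ncnt 2 b (b::q'') n := by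
  have hba : (!b) = a := (bool_eq_not hab).symm
  rw [Ncnt, cnt_succ_pivot b]
  have h1 : cnt (fun w => occ (a::b::b::q'') (b::w) = 0 ∧ occ (b::b::q'') (b::w) = 2) n
      = Ncnt 2 b (b::q'') n := by
    rw [Ncnt]
    apply cnt_congr
    intro w
    rw [occ_cons_diff hab.symm, occ_cons_same]
    have f1 : occ (b::b::q'') w = 0 → occ (a::b::b::q'') w = 0 := fun h => occ_cons_zero h
    have f2 : 1 ≤ occ (b::b::q'') w → 2 ≤ occ (b::q'') w := occ_two b q'' w
    omega
  have h2 : cnt (fun w => occ (a::b::b::q'') ((!b)::w) = 0 ∧ occ (b::b::q'') ((!b)::w) = 2) n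
      = 0 := by
    apply cnt_false
    intro w
    rw [hba, occ_cons_same, occ_cons_diff hab]
    omega
  rw [h1, h2, Nat.add_zero]

lemma occ_L5 {a b : Bool} (hab : a ≠ b) (q'' w : List Bool)
    (h0 : occ (a::b::a::q'') w = 0) (h1 : occ (b::a::q'') w = 1) :
    occ (a::q'') w = 1 := by
  cases w with
  | nil => simp at h1
  | cons x w' =>
    by_cases hx : x = b
    · rw [hx] at h0 h1 ⊢
      rw [occ_cons_diff hab.symm] at h0
      rw [occ_cons_same] at h1
      rw [occ_cons_diff hab.symm]
      have f2 : 1 ≤ occ (b::a::q'') w' → 1 ≤ occ (a::q'') w' := occ_tail_ge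
      omega
    · have hx' : x = a := by
        cases x <;> cases a <;> cases b <;> simp_all
      subst hx'
      rw [occ_cons_same] at h0
      rw [occ_cons_diff hab] at h1
      omega

lemma Ncnt2_boundary_alt {a b : Bool} (hab : a ≠ b) (q'' : List Bool) (n : ℕ) :
    Ncnt 2 a (b::a::q'') (n+1) = Ncnt 2 b (a::q'') n + Ncnt 1 a (b::a::q'') n := by
  have hba : (!b) = a := (bool_eq_not hab).symm
  rw [Ncnt, cnt_succ_pivot b]
  have h2 : cnt (fun w => occ (a::b::a::q'') ((!b)::w) = 0 ∧ occ (b::a::q'') ((!b)::w) = 2) n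
      = 0 := by
    apply cnt_false
    intro w
    rw [hba, occ_cons_same, occ_cons_diff hab]
    omega
  have h1 : cnt (fun w => occ (a::b::a::q'') (b::w) = 0 ∧ occ (b::a::q'') (b::w) = 2) n
      = Ncnt 2 b (a::q'') n + Ncnt 1 a (b::a::q'') n := by
    rw [Ncnt, Ncnt]
    apply cnt_split
    · intro w
      rw [occ_cons_diff hab.symm, occ_cons_same]
      constructor
      · rintro ⟨hz, hs⟩
        rcases Nat.lt_or_ge (occ (b::a::q'') w) 1 with hlt | hge
        · left
          constructor
          · omega
          · omega
        · right
          have f2 : 1 ≤ occ (a::q'') w := occ_tail_ge hge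
          have hone : occ (b::a::q'') w = 1 := by omega
          exact ⟨hz, hone⟩
      · rintro (⟨hz, hs⟩ | ⟨hz, hone⟩)
        · exact ⟨occ_cons_zero hz, by omega⟩
        · have := occ_L5 hab q'' w hz hone
          exact ⟨hz, by omega⟩
    · rintro w ⟨hz, hs⟩ ⟨hz', hone⟩
      have : occ (b::a::q'') w = 0 := by
        by_contra hc
        have := occ_tail_ge (Nat.one_le_iff_ne_zero.mpr hc)
        omega
      omega
  rw [h1, h2, Nat.add_zero]

lemma Jcnt_same (a : Bool) (t'' : List Bool) (n : ℕ) : Jcnt a (a::t'') n = 0 := by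
  apply cnt_false
  intro w
  rintro ⟨h1, h2⟩
  have := occ_two a t'' w (by omega)
  omega

lemma Jcnt_diff_zero {a b : Bool} (t'' : List Bool) : Jcnt a (b::t'') 0 = 0 := by
  rw [Jcnt, cnt_zero]
  simp

lemma Jcnt_diff_succ {a b : Bool} (hab : a ≠ b) (t'' : List Bool) (n : ℕ) :
    Jcnt a (b::t'') (n+1) = Ncnt 1 a (b::t'') n := by
  have hba : (!a) = b := (bool_eq_not hab.symm).symm
  rw [Jcnt, cnt_succ_pivot a]
  have h1 : cnt (fun w => occ (a::b::t'') (a::w) = 1 ∧ occ (b::t'') (a::w) = 1) n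
      = Ncnt 1 a (b::t'') n := by
    rw [Ncnt]
    apply cnt_congr
    intro w
    rw [occ_cons_same, occ_cons_diff hab]
    omega
  have h2 : cnt (fun w => occ (a::b::t'') ((!a)::w) = 1 ∧ occ (b::t'') ((!a)::w) = 1) n
      = 0 := by
    apply cnt_false
    intro w
    rw [hba, occ_cons_diff hab.symm, occ_cons_same]
    rintro ⟨hp, hq⟩
    have f1 : 1 ≤ occ (b::t'') w := occ_tail_ge (b := a) (q' := b::t'') (by omega)
    have f2 : 1 ≤ occ t'' w := occ_tail_ge (b := b) (q' := t'') f1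
    omega
  rw [h1, h2, Nat.add_zero]

lemma Bcnt_step (a : Bool) (b : Bool) (t'' : List Bool) (n : ℕ) :
    cnt (fun w => occ (a::b::t'') w = 2) (n+1)
      = cnt (fun w => occ (a::b::t'') w = 2) n + (Ncnt 2 a (b::t'') n + Jcnt a (b::t'') n) := by
  rw [cnt_succ_pivot a]
  have h2 : cnt (fun w => occ (a::b::t'') ((!a)::w) = 2) n
      = cnt (fun w => occ (a::b::t'') w = 2) n := by
    apply cnt_congr
    intro w
    rw [occ_cons_diff (Bool.not_ne_self a)]
  have h1 : cnt (fun w => occ (a::b::t'') (a::w) = 2) n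
      = Ncnt 2 a (b::t'') n + Jcnt a (b::t'') n := by
    rw [Ncnt, Jcnt]
    apply cnt_split
    · intro w
      rw [occ_cons_same]
      have f1 : 1 ≤ occ (a::b::t'') w → 1 ≤ occ (b::t'') w := occ_tail_ge
      omega
    · rintro w ⟨h1', _⟩ ⟨h2', _⟩
      omega
  rw [h1, h2, Nat.add_comm]

lemma Ncnt1_closed : ∀ (n : ℕ) (a : Bool) (q : List Bool),
    Ncnt 1 a q n = if bnd a q ≤ n then (n - bnd a q).choose (q.length - bnd a q) else 0 := by
  intro n
  induction n with
  | zero =>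
    intro a q
    cases q with
    | nil => simp [Ncnt_nil, bnd]
    | cons b q' =>
      rw [Ncnt, cnt_zero]
      have h1 : ¬ (occ (a::b::q') [] = 0 ∧ occ (b::q') [] = 1) := by simp
      rw [if_neg h1]
      by_cases h : bnd a (b::q') ≤ 0
      · rw [if_pos h]
        have : (0:ℕ) - bnd a (b::q') = 0 := by omega
        rw [this]
        rw [Nat.choose_eq_zero_of_lt (by simp [List.length_cons]; omega)]
      · rw [if_neg h]
  | succ n ih =>
    intro a q
    cases q with
    | nil =>
      rw [Ncnt_nil]
      simp [bnd]
    | cons b q' =>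
      by_cases hab : a = b
      · subst hab
        rw [Ncnt_within, ih, ih]
        have hb : bnd a (a::q') = bnd a q' := by simp [bnd]
        have hlen : (a::q').length = q'.length + 1 := rfl
        rw [hb, hlen]
        have hble : bnd a q' ≤ q'.length := bnd_le a q'
        set β := bnd a q' with hβ
        set m := q'.length with hm
        by_cases h1 : β ≤ n
        · rw [if_pos h1, if_pos h1, if_pos (by omega : β ≤ n + 1)]
          have e1 : n + 1 - β = (n - β) + 1 := by omega
          have e2 : m + 1 - β = (m - β) + 1 := by omega
          rw [e1, e2, Nat.choose_succ_succ']
          omega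
        · rw [if_neg h1, if_neg h1]
          by_cases h2 : β ≤ n + 1
          · rw [if_pos h2]
            have e1 : n + 1 - β = 0 := by omega
            rw [e1, Nat.choose_eq_zero_of_lt (by omega)]
          · rw [if_neg h2]
      · rw [Ncnt1_boundary hab, ih]
        have hb : bnd a (b::q') = 1 + bnd b q' := by simp [bnd, hab]
        have hlen : (a :: q').length = q'.length + 1 := rfl
        rw [hb]
        set β := bnd b q' with hβ
        set m := q'.length with hm
        have : (b::q').length = m + 1 := rfl
        rw [this]
        by_cases h1 : β ≤ n
        · rw [if_pos h1, if_pos (by omega : 1 + β ≤ n + 1)]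
          have e1 : n + 1 - (1 + β) = n - β := by omega
          have e2 : m + 1 - (1 + β) = m - β := by omega
          rw [e1, e2]
        · rw [if_neg h1, if_neg (by omega)]

lemma Ncnt2_closed : ∀ (n : ℕ) (a : Bool) (q : List Bool),
    Ncnt 2 a q n = if bnd a q + 1 ≤ n then
      c1 a q * ((n - bnd a q - 1).choose (q.length - bnd a q)) else 0 := by
  intro n
  induction n with
  | zero =>
    intro a q
    have h0 : Ncnt 2 a q 0 = 0 := by
      rw [Ncnt, cnt_zero, if_neg]
      rintro ⟨-, h2⟩
      cases q <;> simp_all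
    rw [h0, if_neg (by omega)]
  | succ n ih =>
    intro a q
    cases q with
    | nil =>
      rw [Ncnt_nil]
      simp [c1]
    | cons b q' =>
      by_cases hab : a = b
      · -- within a run
        subst hab
        rw [Ncnt_within, ih, ih]
        have hb : bnd a (a::q') = bnd a q' := by simp [bnd]
        have hc : c1 a (a::q') = c1 a q' := by simp [c1]
        rw [hb, hc]
        have hble : bnd a q' ≤ q'.length := bnd_le a q'
        set β := bnd a q' with hβ
        set m := q'.length with hm
        have hlen : (a::q').length = m + 1 := rfl
        rw [hlen]
        by_cases h1 : β + 1 ≤ n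
        · rw [if_pos h1, if_pos h1, if_pos (by omega : β + 1 ≤ n + 1)]
          have e1 : n + 1 - β - 1 = (n - β - 1) + 1 := by omega
          have e2 : m + 1 - β = (m - β) + 1 := by omega
          rw [e1, e2, Nat.choose_succ_succ', Nat.mul_add]
          ring
        · rw [if_neg h1, if_neg h1]
          by_cases h2 : β + 1 ≤ n + 1
          · rw [if_pos h2]
            have e1 : n + 1 - β - 1 = 0 := by omega
            rw [e1, Nat.choose_eq_zero_of_lt (by omega), Nat.mul_zero]
          · rw [if_neg h2]
      · -- boundary
        cases q' with
        | nil =>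
          rw [Ncnt2_boundary_nil hab, Ncnt1_closed]
          have hb : bnd a [b] = 1 := by simp [bnd, hab]
          have hc : c1 a [b] = 1 := by simp [c1, fstOne, hab]
          rw [hb, hc]
          have hlen : ([b] : List Bool).length = 1 := rfl
          rw [hlen]
          by_cases h1 : 1 ≤ n
          · rw [if_pos h1, if_pos (by omega : 1 + 1 ≤ n + 1)]
            have e1 : n + 1 - 1 - 1 = n - 1 := by omega
            rw [e1, Nat.one_mul]
          · rw [if_neg h1, if_neg (by omega)]
        | cons c q'' =>
          by_cases hbc : b = c
          · -- run of b continues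
            subst hbc
            rw [Ncnt2_boundary_same hab, ih]
            have hb1 : bnd b (b::q'') = bnd b q'' := by simp [bnd]
            have hb2 : bnd a (b::b::q'') = 1 + bnd b q'' := by simp [bnd, hab]
            have hc1 : c1 b (b::q'') = c1 b q'' := by simp [c1]
            have hc2 : c1 a (b::b::q'') = c1 b q'' := by
              simp [c1, fstOne, hab]
            rw [hb1, hb2, hc1, hc2]
            have hble : bnd b q'' ≤ q''.length := bnd_le b q''
            set γ := bnd b q'' with hγ
            set m := q''.length with hm
            have hl1 : (b::q'').length = m + 1 := rfl
            have hl2 : (b::b::q'').length = m + 2 := rfl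
            rw [hl1, hl2]
            by_cases h1 : γ + 1 ≤ n
            · rw [if_pos h1, if_pos (by omega : 1 + γ + 1 ≤ n + 1)]
              have e1 : n + 1 - (1 + γ) - 1 = n - γ - 1 := by omega
              have e2 : m + 2 - (1 + γ) = m + 1 - γ := by omega
              rw [e1, e2]
            · rw [if_neg h1, if_neg (by omega)]
          · -- alternation : a = c, pattern becomes c :: b :: c :: q''
            have hca : c = a := by cases a <;> cases b <;> cases c <;> simp_all
            subst hca
            rw [Ncnt2_boundary_alt hab, ih, Ncnt1_closed]
            have hb1 : bnd b (c::q'') = 1 + bnd c q'' := by simp [bnd, hbc]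
            have hb2 : bnd c (b::c::q'') = 1 + (1 + bnd c q'') := by simp [bnd, hab, hbc]
            have hc1 : c1 c (b::c::q'') = c1 b (c::q'') + 1 := by simp [c1, fstOne, hab, hbc]
            rw [hb1, hb2, hc1]
            have hble : bnd c q'' ≤ q''.length := bnd_le c q''
            set γ := bnd c q'' with hγ
            set m := q''.length with hm
            have hl1 : (c::q'').length = m + 1 := rfl
            have hl2 : (b::c::q'').length = m + 2 := rfl
            rw [hl1, hl2]
            by_cases h1 : 1 + γ + 1 ≤ n
            · rw [if_pos h1, if_pos (by omega : 1 + (1 + γ) ≤ n),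
                if_pos (by omega : 1 + (1 + γ) + 1 ≤ n + 1)]
              have e1 : n - (1 + (1 + γ)) = n - (1 + γ) - 1 := by omega
              have e2 : m + 2 - (1 + (1 + γ)) = m + 1 - (1 + γ) := by omega
              have e3 : n + 1 - (1 + (1 + γ)) - 1 = n - (1 + γ) - 1 := by omega
              rw [e1, e2, e3, Nat.add_mul, Nat.one_mul]
            · rw [if_neg (by omega : ¬ (1 + γ + 1 ≤ n)),
                if_neg (by omega : ¬ (1 + (1 + γ) ≤ n)),
                if_neg (by omega : ¬ (1 + (1 + γ) + 1 ≤ n + 1))]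

lemma Jcnt_closed {a b : Bool} (hab : a ≠ b) (t'' : List Bool) (n : ℕ) :
    Jcnt a (b::t'') n = if bnd a (b::t'') + 1 ≤ n then
      ((n - bnd a (b::t'') - 1).choose ((b::t'').length - bnd a (b::t''))) else 0 := by
  cases n with
  | zero => rw [Jcnt_diff_zero, if_neg (by omega)]
  | succ n =>
    rw [Jcnt_diff_succ hab, Ncnt1_closed]
    by_cases h1 : bnd a (b::t'') ≤ n
    · rw [if_pos h1, if_pos (by omega)]
      have e1 : n + 1 - bnd a (b::t'') - 1 = n - bnd a (b::t'') := by omega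
      rw [e1]
    · rw [if_neg h1, if_neg (by omega)]

lemma Bcnt2_closed (a b : Bool) (t'' : List Bool) (n : ℕ) :
    cnt (fun w => occ (a::b::t'') w = 2) n
      = (c1 a (b::t'') + fstOne a (b::t''))
        * ((n - (bnd a (b::t'') + 1)).choose ((a::b::t'').length + 1 - (bnd a (b::t'') + 1))) := by
  have hble : bnd a (b::t'') ≤ (b::t'').length := bnd_le a (b::t'')
  have hlen1 : ((b::t'') : List Bool).length = t''.length + 1 := rfl
  have hlen2 : ((a::b::t'') : List Bool).length = t''.length + 2 := rfl
  set r1 := c1 a (b::t'') + fstOne a (b::t'') with hr1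
  set β := bnd a (b::t'') with hβ
  set m := t''.length with hm
  rw [hlen1] at hble
  rw [hlen2]
  induction n with
  | zero =>
    rw [cnt_zero, if_neg (by simp)]
    have e1 : (0:ℕ) - (β + 1) = 0 := by omega
    rw [e1, Nat.choose_eq_zero_of_lt (by omega), Nat.mul_zero]
  | succ n ihn =>
    rw [Bcnt_step, ihn]
    have hstep : Ncnt 2 a (b::t'') n + Jcnt a (b::t'') n
        = if β + 1 ≤ n then r1 * ((n - (β+1)).choose (m + 2 - (β+1))) else 0 := by
      rw [Ncnt2_closed, hlen1]
      by_cases hab : a = b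
      · have hJ : Jcnt a (b::t'') n = 0 := by rw [hab]; exact Jcnt_same b t'' n
        have hf : fstOne a (b::t'') = 0 := by simp [fstOne, hab]
        rw [hJ, Nat.add_zero]
        by_cases h1 : β + 1 ≤ n
        · rw [if_pos h1, if_pos h1]
          have e1 : n - β - 1 = n - (β + 1) := by omega
          have e2 : m + 1 - β = m + 2 - (β + 1) := by omega
          rw [e1, e2, hr1, hf]
          simp
        · rw [if_neg h1, if_neg h1]
      · have hf : fstOne a (b::t'') = 1 := by simp [fstOne, hab]
        rw [Jcnt_closed hab, hlen1]
        by_cases h1 : β + 1 ≤ n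
        · rw [if_pos h1, if_pos h1, if_pos h1]
          have e1 : n - β - 1 = n - (β + 1) := by omega
          have e2 : m + 1 - β = m + 2 - (β + 1) := by omega
          rw [e1, e2, hr1, hf, Nat.add_mul, Nat.one_mul]
        · rw [if_neg h1, if_neg h1, if_neg h1]
    rw [hstep]
    by_cases h1 : β + 1 ≤ n
    · rw [if_pos h1]
      have e1 : n + 1 - (β + 1) = (n - (β + 1)) + 1 := by omega
      have e2 : m + 2 + 1 - (β + 1) = (m + 2 - (β + 1)) + 1 := by omega
      rw [e1, e2, Nat.choose_succ_succ', Nat.mul_add]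
      ring
    · rw [if_neg h1, Nat.add_zero]
      have e1 : n - (β + 1) = 0 := by omega
      have e2 : n + 1 - (β + 1) = 0 := by omega
      rw [e1, e2, Nat.choose_eq_zero_of_lt (by omega)]

lemma occ_single (a : Bool) (w : List Bool) : occ [a] w = w.count a := by
  induction w with
  | nil => simp
  | cons x w ih =>
    by_cases hx : x = a
    · rw [hx, occ_cons_same, occ_empty, ih, List.count_cons_self]
    · rw [occ_cons_diff hx, ih, List.count_cons_of_ne hx]

lemma Ecnt_closed : ∀ (n k : ℕ) (a : Bool), cnt (fun w => w.count a = k) n = n.choose k := by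
  intro n
  induction n with
  | zero =>
    intro k a
    rw [cnt_zero]
    cases k <;> simp
  | succ n ih =>
    intro k a
    rw [cnt_succ_pivot a]
    cases k with
    | zero =>
      have h1 : cnt (fun w => List.count a (a::w) = 0) n = 0 :=
        cnt_false (by intro w; rw [List.count_cons_self]; omega) n
      have h2 : cnt (fun w => List.count a ((!a)::w) = 0) n
          = cnt (fun w => List.count a w = 0) n :=
        cnt_congr (fun w => by
          rw [List.count_cons_of_ne (Bool.not_ne_self a)]) n
      rw [h1, h2, ih]
      simp
    | succ k' =>
      have h1 : cnt (fun w => List.count a (a::w) = k' + 1) n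
          = cnt (fun w => List.count a w = k') n :=
        cnt_congr (fun w => by rw [List.count_cons_self]; omega) n
      have h2 : cnt (fun w => List.count a ((!a)::w) = k' + 1) n
          = cnt (fun w => List.count a w = k' + 1) n :=
        cnt_congr (fun w => by
          rw [List.count_cons_of_ne (Bool.not_ne_self a)]) n
      rw [h1, h2, ih, ih, Nat.choose_succ_succ']

lemma splitBy_loop_eq (l : List Bool) : ∀ (ag : Bool) (g : List Bool) (gs : List (List Bool)),
    List.splitBy.loop (· == ·) l ag g gs
      = gs.reverse ++ ((g.reverse ++ ag :: l.takeWhile (· == ag)) :: runs (l.dropWhile (· == ag))) := by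
  induction l with
  | nil =>
    intro ag g gs
    simp [List.splitBy.loop, runs, List.splitBy]
  | cons b l ih =>
    intro ag g gs
    by_cases hb : ag = b
    · have hb' : (ag == b) = true := by simp [hb]
      rw [List.splitBy.loop]
      simp only [hb']
      rw [ih b (ag::g) gs]
      have ht : (b::l).takeWhile (· == ag) = b :: l.takeWhile (· == ag) := by
        simp [List.takeWhile_cons, hb]
      have hd : (b::l).dropWhile (· == ag) = l.dropWhile (· == ag) := by
        simp [List.dropWhile_cons, hb]
      rw [ht, hd, ← hb]
      simp
    · have hb' : (ag == b) = false := by simp [hb]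
      rw [List.splitBy.loop]
      simp only [hb']
      rw [ih b [] ((ag::g).reverse::gs)]
      have ht : (b::l).takeWhile (· == ag) = [] := by
        simp [List.takeWhile_cons, Ne.symm hb]
      have hd : (b::l).dropWhile (· == ag) = b::l := by
        simp [List.dropWhile_cons, Ne.symm hb]
      rw [ht, hd]
      have hr : runs (b::l) = (b :: l.takeWhile (· == b)) :: runs (l.dropWhile (· == b)) := by
        show List.splitBy.loop (· == ·) l b [] [] = _
        rw [ih b [] []]
        simp
      rw [hr]
      simp

lemma runs_cons (a : Bool) (t : List Bool) :
    runs (a::t) = (a :: t.takeWhile (· == a)) :: runs (t.dropWhile (· == a)) := by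
  show List.splitBy.loop (· == ·) t a [] [] = _
  rw [splitBy_loop_eq t a [] []]
  simp

lemma bridge1 : ∀ (t : List Bool) (a : Bool), numRuns (a::t) = bnd a t + 1 := by
  intro t
  induction t with
  | nil =>
    intro a
    simp [numRuns, runs_cons, bnd]
    rfl
  | cons b t ih =>
    intro a
    by_cases hab : a = b
    · subst hab
      have h1 : numRuns (a::a::t) = numRuns (a::t) := by
        rw [numRuns, numRuns, runs_cons a (a::t), runs_cons a t]
        have ht : (a::t).takeWhile (· == a) = a :: t.takeWhile (· == a) := by
          simp [List.takeWhile_cons]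
        have hd : (a::t).dropWhile (· == a) = t.dropWhile (· == a) := by
          simp [List.dropWhile_cons]
        rw [ht, hd]
        simp
      rw [h1, ih a]
      simp [bnd]
    · have h1 : numRuns (a::b::t) = numRuns (b::t) + 1 := by
        rw [numRuns, numRuns, runs_cons a (b::t)]
        have ht : (b::t).takeWhile (· == a) = [] := by
          simp [List.takeWhile_cons, Ne.symm hab]
        have hd : (b::t).dropWhile (· == a) = b::t := by
          simp [List.dropWhile_cons, Ne.symm hab]
        rw [ht, hd]
        simp [Nat.add_comm]
      rw [h1, ih b]
      simp [bnd, hab]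
      omega

lemma fstOne_takeWhile (a : Bool) (t : List Bool) :
    (if 1 + (t.takeWhile (· == a)).length = 1 then 1 else 0) = fstOne a t := by
  cases t with
  | nil => simp [fstOne]
  | cons c t' =>
    by_cases hac : a = c
    · have : (c::t').takeWhile (· == a) = a :: t'.takeWhile (· == a) := by
        simp [List.takeWhile_cons, hac.symm, ← hac]
      rw [this]
      simp [fstOne, hac]
    · have : (c::t').takeWhile (· == a) = [] := by
        simp [List.takeWhile_cons, Ne.symm hac]
      rw [this]
      simp [fstOne, hac]

lemma bridge2 : ∀ (t : List Bool) (a : Bool), numRunsOfSize (a::t) 1 = c1 a t + fstOne a t := by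
  intro t
  induction t with
  | nil =>
    intro a
    simp [numRunsOfSize, runs_cons, c1, fstOne]
    rfl
  | cons b t ih =>
    intro a
    by_cases hab : a = b
    · subst hab
      have e1 : numRunsOfSize (a::a::t) 1
          = ((runs (t.dropWhile (· == a))).map List.length).count 1 := by
        rw [numRunsOfSize, runs_cons a (a::t)]
        have ht : (a::t).takeWhile (· == a) = a :: t.takeWhile (· == a) := by
          simp [List.takeWhile_cons]
        have hd : (a::t).dropWhile (· == a) = t.dropWhile (· == a) := by
          simp [List.dropWhile_cons]
        rw [ht, hd]
        simp [List.count_cons]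
      have e2 : numRunsOfSize (a::t) 1
          = ((runs (t.dropWhile (· == a))).map List.length).count 1
            + (if 1 + (t.takeWhile (· == a)).length = 1 then 1 else 0) := by
        rw [numRunsOfSize, runs_cons a t, List.map_cons, List.count_cons]
        congr 1
        by_cases htw : (t.takeWhile (· == a)).length = 0
        · rw [if_pos (by simp [htw]), if_pos (by omega)]
        · rw [if_neg (by simp [htw]), if_neg (by omega)]
      have := ih a
      rw [e2, fstOne_takeWhile] at this
      rw [e1]
      have hc : c1 a (a::t) = c1 a t := by simp [c1]
      have hf : fstOne a (a::t) = 0 := by simp [fstOne]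
      rw [hc, hf]
      omega
    · have e1 : numRunsOfSize (a::b::t) 1 = numRunsOfSize (b::t) 1 + 1 := by
        rw [numRunsOfSize, numRunsOfSize, runs_cons a (b::t)]
        have ht : (b::t).takeWhile (· == a) = [] := by
          simp [List.takeWhile_cons, Ne.symm hab]
        have hd : (b::t).dropWhile (· == a) = b::t := by
          simp [List.dropWhile_cons, Ne.symm hab]
        rw [ht, hd]
        simp [List.count_cons]
      rw [e1, ih b]
      have hc : c1 a (b::t) = c1 b t + fstOne b t := by simp [c1, hab]
      have hf : fstOne a (b::t) = 1 := by simp [fstOne, hab]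
      rw [hc, hf]

theorem B_two_eq (p : List Bool) (l r r₁ : ℕ) (hl : p.length = l) (hr : numRuns p = r)
    (hr₁ : numRunsOfSize p 1 = r₁) (n : ℕ) :
    (2 ≤ l → B n p 2 = r₁ * (n - r).choose (l + 1 - r)) ∧
    (l = 1 → B n p 2 = n.choose 2) := by
  constructor
  · intro h2
    subst hl
    cases p with
    | nil => simp at h2
    | cons a t =>
      cases t with
      | nil => simp at h2
      | cons b t'' =>
        rw [bridge1] at hr
        rw [bridge2] at hr₁
        subst hr
        subst hr₁
        rw [B_eq_cnt, Bcnt2_closed a b t'']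
  · intro h1
    subst hl
    cases p with
    | nil => simp at h1
    | cons a t =>
      cases t with
      | cons b t'' => simp at h1
      | nil =>
        rw [B_eq_cnt]
        have he : cnt (fun w => occ [a] w = 2) n = cnt (fun w => w.count a = 2) n :=
          cnt_congr (fun w => by rw [occ_single]) n
        rw [he, Ecnt_closed]
end

section
/- Let p be a binary word with exactly 1 run, of length l. If l = 1 (i.e., p = 0 or p = 1), then p does not have an internal zero at any n ≥ 0. If l ≥ 2, then p has an internal zero at every n ≥ l + 1. -/
theorem count_map_cons (a : Bool) (t : List Bool) (s : List (List Bool)) :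
    (s.map (List.cons a)).count (a :: t) = s.count t := by
  induction s with
  | nil => rfl
  | cons x s ih => simp [List.count_cons, ih]

theorem occ'_replicate (b : Bool) : ∀ (w : List Bool) (l : ℕ),
    w.sublists'.count (List.replicate l b) = (w.count b).choose l := by
  intro w
  induction w with
  | nil =>
    intro l
    cases l with
    | zero => simp
    | succ l => simp [List.replicate_succ, List.count_eq_zero]
  | cons a w ih =>
    intro l
    rw [List.sublists'_cons, List.count_append, ih]
    cases l with
    | zero =>
      have : List.count ([] : List Bool) (List.map (List.cons a) w.sublists') = 0 := by
        rw [List.count_eq_zero]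
        simp
      simp [this]
    | succ l =>
      by_cases hab : a = b
      · subst hab
        rw [List.replicate_succ, count_map_cons, ih,
          List.count_cons_self, Nat.choose_succ_succ', Nat.add_comm]
      · have : List.count (List.replicate (l+1) b) (List.map (List.cons a) w.sublists') = 0 := by
          rw [List.count_eq_zero]
          intro hmem
          rw [List.mem_map] at hmem
          obtain ⟨x, -, hx⟩ := hmem
          rw [List.replicate_succ] at hx
          exact hab (List.head_eq_of_cons_eq hx.symm).symm
        rw [this, List.count_cons_of_ne hab]
        simp

theorem occ_replicate (b : Bool) (l : ℕ) (w : List Bool) :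
    occ (List.replicate l b) w = (w.count b).choose l := by
  rw [occ, List.count_eq_countP, (List.sublists_perm_sublists' w).countP_eq,
    ← List.count_eq_countP, occ'_replicate]

theorem B_ne_zero_iff (n : ℕ) (p : List Bool) (k : ℕ) :
    B n p k ≠ 0 ↔ ∃ w : List Bool, w.length = n ∧ occ p w = k := by
  have hfin : Finite {w : List Bool // w.length = n ∧ occ p w = k} := by
    have : {w : List Bool | w.length = n ∧ occ p w = k}.Finite :=
      (List.finite_length_eq Bool n).subset (fun w hw => hw.1)
    exact this.to_subtype
  rw [B, Nat.card_ne_zero]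
  constructor
  · rintro ⟨⟨w, hw⟩, -⟩
    exact ⟨w, hw⟩
  · rintro ⟨w, hw⟩
    exact ⟨⟨⟨w, hw⟩⟩, hfin⟩

theorem chain'_eq_replicate (b : Bool) : ∀ (t : List Bool),
    List.Chain' (fun x y => x = y) (b :: t) → b :: t = List.replicate (t.length + 1) b := by
  intro t
  induction t generalizing b with
  | nil => intro _; rfl
  | cons c t ih =>
    intro h
    simp only [List.Chain', List.isChain_cons_cons] at h
    obtain ⟨rfl, h2⟩ := h
    rw [List.length_cons, List.replicate_succ, ← ih b h2]

/-- The standard witness word: `c` copies of `b` followed by `n - c` copies of `!b`. -/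
theorem witness (b : Bool) (n c : ℕ) (hc : c ≤ n) :
    ∃ w : List Bool, w.length = n ∧ w.count b = c := by
  refine ⟨List.replicate c b ++ List.replicate (n - c) (!b), ?_, ?_⟩
  · simp [Nat.add_sub_cancel' hc]
  · simp [List.count_append, List.count_replicate]

theorem one_run_internalZeros (p : List Bool) (l : ℕ) (hl : p.length = l)
    (hp : numRuns p = 1) :
    (l = 1 → ∀ n : ℕ, ¬ HasInternalZeroAt p n) ∧
    (2 ≤ l → ∀ n : ℕ, l + 1 ≤ n → HasInternalZeroAt p n) := by
  -- first, p = replicate l b for some b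
  obtain ⟨b, hpb⟩ : ∃ b, p = List.replicate l b := by
    obtain ⟨g, hg⟩ := List.length_eq_one_iff.mp hp
    have hflat := List.flatten_splitBy (fun x y => x == y) p
    rw [runs] at hg
    rw [hg] at hflat
    simp only [List.flatten, List.append_eq, List.append_nil] at hflat
    have hmem : p ∈ p.splitBy (fun x y => x == y) := by rw [hg, hflat]; simp
    have hchain := List.isChain_of_mem_splitBy hmem
    have hchain' : List.Chain' (fun x y => x = y) p :=
      hchain.imp (fun x y h => by exact eq_of_beq h)
    cases p with
    | nil => simp [numRuns, runs] at hp
    | cons a t =>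
      refine ⟨a, ?_⟩
      have hlen : l = t.length + 1 := by simp [← hl]
      rw [hlen]
      exact chain'_eq_replicate a t hchain'
  subst hpb
  constructor
  · rintro rfl n ⟨k₁, k₂, k₃, h12, h23, hB1, hB2, hB3⟩
    obtain ⟨w, hwl, hwo⟩ := (B_ne_zero_iff n _ k₃).mp hB3
    rw [occ_replicate, Nat.choose_one_right] at hwo
    have hk3 : k₃ ≤ n := by
      rw [← hwo, ← hwl]; exact List.count_le_length
    obtain ⟨w₂, hw₂l, hw₂c⟩ := witness b n k₂ (by omega)
    exact (B_ne_zero_iff n _ k₂).mpr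
      ⟨w₂, hw₂l, by rw [occ_replicate, hw₂c, Nat.choose_one_right]⟩ hB2
  · intro h2 n hn
    refine ⟨1, 2, l + 1, by omega, by omega, ?_, ?_, ?_⟩
    · obtain ⟨w, hwl, hwc⟩ := witness b n l (by omega)
      exact (B_ne_zero_iff n _ 1).mpr
        ⟨w, hwl, by rw [occ_replicate, hwc, Nat.choose_self]⟩
    · by_contra hB
      obtain ⟨w, hwl, hwo⟩ := (B_ne_zero_iff n _ 2).mp hB
      rw [occ_replicate] at hwo
      set c := w.count b with hc
      rcases lt_trichotomy c l with h | h | h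
      · rw [Nat.choose_eq_zero_of_lt h] at hwo; omega
      · rw [h, Nat.choose_self] at hwo; omega
      · have : (l + 1).choose l ≤ c.choose l := Nat.choose_le_choose l h
        rw [Nat.choose_succ_self_right] at this
        omega
    · obtain ⟨w, hwl, hwc⟩ := witness b n (l + 1) hn
      exact (B_ne_zero_iff n _ (l + 1)).mpr
        ⟨w, hwl, by rw [occ_replicate, hwc, Nat.choose_succ_self_right]⟩
end
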